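/- If u : ℝ → ℂ^N is differentiable and satisfies i u'(t) = K u(t) - γ (ū∘u)∘u + V u(t) with K Hermitian and V real diagonal, then the total energy H(u) = uᴴ K u - (γ/2) Σ_k |u_k|⁴ + uᴴ V u is constant in t. -/

import Mathlib

open Matrix

/-- For the discretized nonlinear Schrödinger equation
`i u' = K u - γ (ū∘u)∘u + V u` with `K` Hermitian and `V` real diagonal,
the total energy `H(u) = uᴴKu - (γ/2) Σ_k |u_k|⁴ + uᴴVu` is conserved. -/
theorem stmt_8 {N : ℕ} (u : ℝ → Fin N → ℂ) (hu : Differentiable ℝ u)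
    (K : Matrix (Fin N) (Fin N) ℂ) (hK : K.IsHermitian)
    (V : Matrix (Fin N) (Fin N) ℝ) (hV : V.IsDiag) (γ : ℝ)
    (hode : ∀ t : ℝ, Complex.I • deriv u t =
      K.mulVec (u t)
        - γ • (fun k => starRingEnd ℂ (u t k) * u t k * u t k)
        + (V.map Complex.ofReal).mulVec (u t)) :
    let H : ℝ → ℂ := fun t =>
      star (u t) ⬝ᵥ K.mulVec (u t)
        - (γ / 2 : ℂ) * ∑ k, (‖u t k‖ ^ 4 : ℂ)
        + star (u t) ⬝ᵥ (V.map Complex.ofReal).mulVec (u t)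
    ∀ s t : ℝ, H s = H t := by
  intro H s t
  set A : Matrix (Fin N) (Fin N) ℂ := K + V.map Complex.ofReal with hAdef
  -- entrywise Hermitian property of A
  have hVsym : Vᵀ = V := hV.isSymm
  have hAH : ∀ k j : Fin N, starRingEnd ℂ (A j k) = A k j := by
    intro k j
    have hKe : starRingEnd ℂ (K j k) = K k j := by
      rw [starRingEnd_apply]; exact hK.apply k j
    have hVe : V j k = V k j := by
      have := congrFun (congrFun hVsym k) j
      simpa [Matrix.transpose_apply] using this
    simp [hAdef, Matrix.add_apply, Matrix.map_apply, map_add, hKe, hVe,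
      Complex.conj_ofReal]
  -- the energy as a single finite sum
  set G : ℝ → ℂ := fun r => ∑ k,
      (starRingEnd ℂ (u r k) * ∑ j, A k j * u r j
        - (γ / 2 : ℂ) * ((starRingEnd ℂ (u r k) * u r k)
            * (starRingEnd ℂ (u r k) * u r k))) with hGdef
  have hH : ∀ r, H r = G r := by
    intro r
    have hnorm : ∀ z : ℂ, (γ / 2 : ℂ) * ((starRingEnd ℂ z * z) * (starRingEnd ℂ z * z))
        = (γ / 2 : ℂ) * (‖z‖ ^ 4 : ℂ) := by
      intro z
      congr 1
      rw [mul_comm ((starRingEnd ℂ) z) z, Complex.mul_conj]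
      rw [← Complex.sq_norm]
      push_cast
      ring
    have h1 : star (u r) ⬝ᵥ A.mulVec (u r)
        = ∑ k, starRingEnd ℂ (u r k) * ∑ j, A k j * u r j := by
      simp [dotProduct, Matrix.mulVec, Pi.star_apply, RCLike.star_def]
    have h2 : H r = star (u r) ⬝ᵥ A.mulVec (u r) - (γ / 2 : ℂ) * ∑ k, (‖u r k‖ ^ 4 : ℂ) := by
      simp only [H, hAdef, Matrix.add_mulVec, dotProduct_add]
      ring
    rw [h2, h1]
    simp only [G]
    rw [Finset.sum_sub_distrib]
    congr 1
    rw [Finset.mul_sum]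
    exact Finset.sum_congr rfl fun k _ => (hnorm (u r k)).symm
  -- the key derivative computation
  have key : ∀ r : ℝ, HasDerivAt G 0 r := by
    intro r
    set v : Fin N → ℂ := deriv u r with hvdef
    have hu' : HasDerivAt u v r := hu.differentiableAt.hasDerivAt
    have hk : ∀ k, HasDerivAt (fun s => u s k) (v k) r := fun k =>
      hasDerivAt_pi.mp hu' k
    have hck : ∀ k, HasDerivAt (fun s => starRingEnd ℂ (u s k))
        (starRingEnd ℂ (v k)) r := by
      intro k
      simpa only [RCLike.star_def] using (hk k).star
    -- componentwise ODE
    have hw : ∀ k, v k = -Complex.I *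
        ((∑ j, A k j * u r j) - (γ : ℂ) * (starRingEnd ℂ (u r k) * u r k * u r k)) := by
      intro k
      have h := congrFun (hode r) k
      simp only [Pi.smul_apply, Pi.add_apply, Pi.sub_apply, smul_eq_mul,
        Complex.real_smul, ← hvdef] at h
      have hA : (∑ j, A k j * u r j) = (K.mulVec (u r)) k
          + ((V.map Complex.ofReal).mulVec (u r)) k := by
        simp [hAdef, Matrix.mulVec, dotProduct, Matrix.add_apply, add_mul,
          Finset.sum_add_distrib]
      rw [hA]
      linear_combination (-Complex.I) * h + v k * Complex.I_sq
    have hwc : ∀ k, starRingEnd ℂ (v k) = Complex.I *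
        ((starRingEnd ℂ (∑ j, A k j * u r j))
          - (γ : ℂ) * (u r k * starRingEnd ℂ (u r k) * starRingEnd ℂ (u r k))) := by
      intro k
      rw [hw k]
      simp only [_root_.map_mul, map_sub, map_neg, Complex.conj_I, Complex.conj_ofReal,
        Complex.conj_conj]
      ring
    -- assemble the derivative
    have hD : HasDerivAt G (∑ k,
        (starRingEnd ℂ (v k) * (∑ j, A k j * u r j)
          + starRingEnd ℂ (u r k) * (∑ j, A k j * v j)
          - (γ / 2 : ℂ) * ((starRingEnd ℂ (v k) * u r k + starRingEnd ℂ (u r k) * v k)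
              * (starRingEnd ℂ (u r k) * u r k)
            + (starRingEnd ℂ (u r k) * u r k)
              * (starRingEnd ℂ (v k) * u r k + starRingEnd ℂ (u r k) * v k)))) r := by
      refine HasDerivAt.fun_sum fun k _ => ?_
      have h1 : HasDerivAt (fun s => starRingEnd ℂ (u s k) * ∑ j, A k j * u s j)
          (starRingEnd ℂ (v k) * (∑ j, A k j * u r j)
            + starRingEnd ℂ (u r k) * (∑ j, A k j * v j)) r :=
        (hck k).mul (HasDerivAt.fun_sum fun j _ => (hk j).const_mul (A k j))
      have h2 : HasDerivAt (fun s => (γ / 2 : ℂ) * ((starRingEnd ℂ (u s k) * u s k)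
            * (starRingEnd ℂ (u s k) * u s k)))
          ((γ / 2 : ℂ) * ((starRingEnd ℂ (v k) * u r k + starRingEnd ℂ (u r k) * v k)
              * (starRingEnd ℂ (u r k) * u r k)
            + (starRingEnd ℂ (u r k) * u r k)
              * (starRingEnd ℂ (v k) * u r k + starRingEnd ℂ (u r k) * v k))) r :=
        (((hck k).mul (hk k)).mul ((hck k).mul (hk k))).const_mul (γ / 2 : ℂ)
      exact h1.sub h2
    -- the derivative vanishes
    have hzero : (∑ k,
        (starRingEnd ℂ (v k) * (∑ j, A k j * u r j)
          + starRingEnd ℂ (u r k) * (∑ j, A k j * v j)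
          - (γ / 2 : ℂ) * ((starRingEnd ℂ (v k) * u r k + starRingEnd ℂ (u r k) * v k)
              * (starRingEnd ℂ (u r k) * u r k)
            + (starRingEnd ℂ (u r k) * u r k)
              * (starRingEnd ℂ (v k) * u r k + starRingEnd ℂ (u r k) * v k)))) = 0 := by
      have hswap : ∑ k, starRingEnd ℂ (u r k) * ∑ j, A k j * v j
          = ∑ j, starRingEnd ℂ (∑ i, A j i * u r i) * v j := by
        calc ∑ k, starRingEnd ℂ (u r k) * ∑ j, A k j * v j
            = ∑ k, ∑ j, starRingEnd ℂ (u r k) * A k j * v j := by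
              simp [Finset.mul_sum, mul_assoc]
          _ = ∑ j, ∑ k, starRingEnd ℂ (u r k) * A k j * v j := Finset.sum_comm
          _ = ∑ j, starRingEnd ℂ (∑ i, A j i * u r i) * v j := by
              refine Finset.sum_congr rfl fun j _ => ?_
              rw [map_sum, Finset.sum_mul]
              refine Finset.sum_congr rfl fun i _ => ?_
              rw [_root_.map_mul, hAH i j]
              ring
      rw [Finset.sum_sub_distrib, Finset.sum_add_distrib, hswap,
        ← Finset.sum_add_distrib, ← Finset.sum_sub_distrib]
      refine Finset.sum_eq_zero fun k _ => ?_
      rw [hwc k, hw k]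
      ring
    rw [hzero] at hD
    exact hD
  have hdiff : Differentiable ℝ G := fun r => (key r).differentiableAt
  have hderiv : ∀ r, deriv G r = 0 := fun r => (key r).deriv
  rw [hH s, hH t]
  exact is_const_of_deriv_eq_zero hdiff hderiv s t
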